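/- arXiv:2008.09543 — 5 statements merged into one kernel-verified Lean document; each statement's English description precedes it below -/
import Mathlib

section
/- For s ∈ (0,∞), the function ψ_s(√s · t) converges pointwise to t²/2 as s → ∞, for every fixed t ≥ 0. -/
noncomputable def psiS (s t : ℝ) : ℝ :=
  s / 2 * (Real.sqrt (1 + 4 * (t / s) ^ 2)
    - Real.log ((1 + Real.sqrt (1 + 4 * (t / s) ^ 2)) / 2) - 1)

noncomputable def gAux (u : ℝ) : ℝ :=
  Real.sqrt (1 + u) - Real.log ((1 + Real.sqrt (1 + u)) / 2) - 1

lemma gAux_zero : gAux 0 = 0 := by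
  simp [gAux]

lemma gAux_deriv : HasDerivAt gAux (1/4) 0 := by
  have h1 : HasDerivAt (fun u : ℝ => 1 + u) 1 0 := by
    simpa using (hasDerivAt_id (0:ℝ)).const_add 1
  have hs : HasDerivAt (fun u : ℝ => Real.sqrt (1 + u)) (1/2) 0 := by
    have := (Real.hasDerivAt_sqrt (by norm_num : (1:ℝ) + 0 ≠ 0)).comp 0 h1
    simpa [Function.comp_def] using this
  have hinner : HasDerivAt (fun u : ℝ => (1 + Real.sqrt (1 + u)) / 2) (1/4) 0 := by
    have := (hs.const_add 1).div_const 2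
    norm_num at this
    convert this using 1
  have hlog : HasDerivAt (fun u : ℝ => Real.log ((1 + Real.sqrt (1 + u)) / 2)) (1/4) 0 := by
    have hne : (1 + Real.sqrt (1 + (0:ℝ))) / 2 ≠ 0 := by norm_num
    have := (Real.hasDerivAt_log hne).comp 0 hinner
    norm_num [Function.comp_def] at this
    convert this using 1
  have h := (hs.sub hlog).sub_const 1
  have : HasDerivAt gAux (1/2 - 1/4) 0 := h
  convert this using 1
  norm_num

theorem stmt_3 (t : ℝ) (ht : 0 ≤ t) :
    Filter.Tendsto (fun s : ℝ => psiS s (Real.sqrt s * t)) Filter.atTop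
      (nhds (t ^ 2 / 2)) := by
  rcases eq_or_lt_of_le ht with h0 | ht'
  · -- t = 0
    subst h0
    have : (fun s : ℝ => psiS s (Real.sqrt s * 0)) = fun _ => 0 := by
      funext s
      simp [psiS]
    rw [this]
    have h2 : ((0:ℝ)) ^ 2 / 2 = 0 := by norm_num
    rw [h2]
    exact tendsto_const_nhds
  · have htne : t ≠ 0 := ht'.ne'
    have hslope : Filter.Tendsto (slope gAux 0) (nhdsWithin 0 {(0:ℝ)}ᶜ)
        (nhds (1/4)) := hasDerivAt_iff_tendsto_slope.mp gAux_deriv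
    have hu : Filter.Tendsto (fun s : ℝ => 4 * t ^ 2 / s) Filter.atTop
        (nhdsWithin 0 {(0:ℝ)}ᶜ) := by
      apply tendsto_nhdsWithin_of_tendsto_nhds_of_eventually_within
      · simpa using tendsto_const_nhds.div_atTop Filter.tendsto_id
      · filter_upwards [Filter.eventually_gt_atTop (0:ℝ)] with s hs
        have : 0 < 4 * t ^ 2 / s := by positivity
        exact this.ne'
    have hcomp := hslope.comp hu
    have hmul : Filter.Tendsto
        (fun s : ℝ => 2 * t ^ 2 * slope gAux 0 (4 * t ^ 2 / s))
        Filter.atTop (nhds (2 * t ^ 2 * (1/4))) := hcomp.const_mul _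
    have heq : (fun s : ℝ => 2 * t ^ 2 * slope gAux 0 (4 * t ^ 2 / s))
        =ᶠ[Filter.atTop] fun s : ℝ => psiS s (Real.sqrt s * t) := by
      filter_upwards [Filter.eventually_gt_atTop (0:ℝ)] with s hs
      have hsne : s ≠ 0 := hs.ne'
      have key : (Real.sqrt s * t / s) ^ 2 = t ^ 2 / s := by
        rw [div_pow, mul_pow, Real.sq_sqrt hs.le]
        field_simp
      have hkey2 : 4 * (Real.sqrt s * t / s) ^ 2 = 4 * t ^ 2 / s := by
        rw [key]; ring
      have hune : 4 * t ^ 2 / s ≠ 0 := by positivity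
      rw [slope_def_field, gAux_zero]
      simp only [psiS, gAux, hkey2]
      field_simp
      ring
    have : (2 : ℝ) * t ^ 2 * (1/4) = t ^ 2 / 2 := by ring
    rw [this] at hmul
    exact hmul.congr' heq
end

section
/- For every y ∈ ℝ^d, inf over x in the open unit ball of e^{-⟨x,y⟩}/(1 - |x|²) equals ((1 + √(1 + |y|²))/2)·exp(1 - √(1 + |y|²)). -/
open RealInnerProductSpace

theorem stmt_4 (d : ℕ) (y : EuclideanSpace ℝ (Fin d)) :
    (⨅ x : Metric.ball (0 : EuclideanSpace ℝ (Fin d)) 1,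
        Real.exp (-⟪(x : EuclideanSpace ℝ (Fin d)), y⟫) / (1 - ‖(x : EuclideanSpace ℝ (Fin d))‖ ^ 2))
      = (1 + Real.sqrt (1 + ‖y‖ ^ 2)) / 2 * Real.exp (1 - Real.sqrt (1 + ‖y‖ ^ 2)) := by
  set c := ‖y‖ with hc
  set s := Real.sqrt (1 + c ^ 2) with hsdef
  have hc0 : 0 ≤ c := norm_nonneg y
  have hs2 : s ^ 2 = 1 + c ^ 2 := Real.sq_sqrt (by positivity)
  have hs0 : 0 ≤ s := Real.sqrt_nonneg _
  have hs1 : 1 ≤ s := by nlinarith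
  have hs1' : (0:ℝ) < 1 + s := by linarith
  set M := (1 + s) / 2 * Real.exp (1 - s) with hM
  -- lower bound at every point of the ball
  have hlb : ∀ x : EuclideanSpace ℝ (Fin d), ‖x‖ < 1 →
      M ≤ Real.exp (-⟪x, y⟫) / (1 - ‖x‖ ^ 2) := by
    intro x hx
    set r := ‖x‖ with hr
    have hr0 : 0 ≤ r := norm_nonneg x
    have hpos : (0:ℝ) < 1 - r ^ 2 := by nlinarith
    rw [le_div_iff₀ hpos]
    have h1 : ⟪x, y⟫ ≤ r * c := real_inner_le_norm x y
    have h2 : Real.exp (-(r * c)) ≤ Real.exp (-⟪x, y⟫) :=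
      Real.exp_le_exp.mpr (by linarith)
    have h3 : s - 1 - r * c + 1 ≤ Real.exp (s - 1 - r * c) :=
      Real.add_one_le_exp _
    have h4 : Real.exp (1 - s) * (s - r * c) ≤ Real.exp (-(r * c)) := by
      have : Real.exp (1 - s) * Real.exp (s - 1 - r * c) = Real.exp (-(r * c)) := by
        rw [← Real.exp_add]; ring_nf
      calc Real.exp (1 - s) * (s - r * c)
          ≤ Real.exp (1 - s) * Real.exp (s - 1 - r * c) := by
            apply mul_le_mul_of_nonneg_left _ (Real.exp_nonneg _); linarith
        _ = Real.exp (-(r * c)) := this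
    have h5 : M * (1 - r ^ 2) ≤ Real.exp (1 - s) * (s - r * c) := by
      rw [hM]
      have key : (1 + s) / 2 * (1 - r ^ 2) ≤ s - r * c := by
        nlinarith [sq_nonneg ((1 + s) * r - c)]
      have := mul_le_mul_of_nonneg_left key (Real.exp_nonneg (1 - s))
      nlinarith [this]
    linarith
  -- the minimizing point
  set x₀ : EuclideanSpace ℝ (Fin d) := (1 / (1 + s)) • y with hx₀
  have hnx₀ : ‖x₀‖ = c / (1 + s) := by
    rw [hx₀, norm_smul, Real.norm_eq_abs, abs_of_pos (by positivity)]
    field_simp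
    exact hc.symm
  have hx₀mem : x₀ ∈ Metric.ball (0 : EuclideanSpace ℝ (Fin d)) 1 := by
    rw [Metric.mem_ball, dist_zero_right, hnx₀, div_lt_one hs1']
    nlinarith
  have hinner : ⟪x₀, y⟫ = s - 1 := by
    rw [hx₀, real_inner_smul_left, real_inner_self_eq_norm_sq, ← hc]
    field_simp
    nlinarith
  have hval : Real.exp (-⟪x₀, y⟫) / (1 - ‖x₀‖ ^ 2) = M := by
    rw [hinner, hnx₀, hM]
    have h1 : 1 - (c / (1 + s)) ^ 2 = 2 / (1 + s) := by
      field_simp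
      nlinarith
    rw [h1]
    rw [div_div_eq_mul_div, neg_sub]
    ring
  have hne : Nonempty (Metric.ball (0 : EuclideanSpace ℝ (Fin d)) 1) :=
    ⟨⟨x₀, hx₀mem⟩⟩
  have hbdd : BddBelow (Set.range fun x : Metric.ball (0 : EuclideanSpace ℝ (Fin d)) 1 =>
      Real.exp (-⟪(x : EuclideanSpace ℝ (Fin d)), y⟫) / (1 - ‖(x : EuclideanSpace ℝ (Fin d))‖ ^ 2)) := by
    refine ⟨M, ?_⟩
    rintro z ⟨⟨x, hx⟩, rfl⟩
    exact hlb x (by simpa [dist_zero_right] using (Metric.mem_ball.mp hx))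
  apply le_antisymm
  · exact (ciInf_le hbdd ⟨x₀, hx₀mem⟩).trans_eq hval
  · exact le_ciInf fun ⟨x, hx⟩ =>
      hlb x (by simpa [dist_zero_right] using (Metric.mem_ball.mp hx))
end

section
/- Let f: ℝ^d → [0,∞) be upper semi-continuous, log-concave, with finite positive integral. Suppose the superlevel set {f ≥ Θ} contains ϑB^d (Θ = ‖f‖_∞/2, ϑ > 0), and f ≤ ℓ where ℓ is log-concave with maximum α attained at a. Then the convex hull of ϑB^d and {a} is contained in {ℓ ≥ Θ}, and hence ∫ℓ ≥ Θ · ϑ^{d-1}·vol_{d-1}(B^{d-1})·|a|/d. -/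
open MeasureTheory
open Metric

lemma integ_aux (n : ℕ) {h : ℝ} (hh : 0 < h) :
    ∫ t in (0:ℝ)..h, (1 - t / h) ^ n = h / (n + 1) := by
  have hd : ∀ t : ℝ, HasDerivAt (fun t => -(h / (n + 1)) * (1 - t / h) ^ (n + 1))
      ((1 - t / h) ^ n) t := by
    intro t
    have h1 : HasDerivAt (fun t : ℝ => 1 - t / h) (-(1 / h)) t := by
      simpa using ((hasDerivAt_id t).div_const h).const_sub 1
    have h2 := (h1.pow (n + 1)).const_mul (-(h / (n + 1)))
    convert h2 using 1
    · rfl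
    · rfl
    · rfl
    have hne : (h : ℝ) ≠ 0 := hh.ne'
    have hne2 : ((n : ℝ) + 1) ≠ 0 := by positivity
    rw [Nat.add_sub_cancel]; push_cast
    field_simp
  rw [intervalIntegral.integral_eq_sub_of_hasDerivAt (fun t _ => hd t)
    (by apply Continuous.intervalIntegrable; fun_prop)]
  rw [div_self hh.ne']
  simp

lemma cone_vol (n : ℕ) {ϑ h : ℝ} (hϑ : 0 < ϑ) (hh : 0 < h) :
    volume {x : EuclideanSpace ℝ (Fin (n + 1)) | 0 ≤ x 0 ∧ x 0 ≤ h ∧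
        ∑ i : Fin n, x (Fin.succ i) ^ 2 ≤ (ϑ * (1 - x 0 / h)) ^ 2}
      = ENNReal.ofReal (ϑ ^ n * (h / (n + 1))) *
        volume (closedBall (0 : EuclideanSpace ℝ (Fin n)) 1) := by
  set T : Set (ℝ × (Fin n → ℝ)) :=
    {p | 0 ≤ p.1 ∧ p.1 ≤ h ∧ ∑ i, p.2 i ^ 2 ≤ (ϑ * (1 - p.1 / h)) ^ 2} with hT
  have cT : IsClosed T := by
    have c1 : Continuous fun p : ℝ × (Fin n → ℝ) => p.1 := continuous_fst
    have c2 : Continuous fun p : ℝ × (Fin n → ℝ) => ∑ i, p.2 i ^ 2 :=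
      continuous_finset_sum _ fun i _ => ((continuous_apply i).comp continuous_snd).pow 2
    have c3 : Continuous fun p : ℝ × (Fin n → ℝ) => (ϑ * (1 - p.1 / h)) ^ 2 := by fun_prop
    exact (isClosed_le continuous_const c1).inter
      ((isClosed_le c1 continuous_const).inter (isClosed_le c2 c3))
  have mT : MeasurableSet T := cT.measurableSet
  have e1 := EuclideanSpace.volume_preserving_symm_measurableEquiv_toLp (Fin (n + 1))
  have e2 := volume_preserving_piFinSuccAbove (fun _ : Fin (n + 1) => ℝ) 0
  have key : {x : EuclideanSpace ℝ (Fin (n + 1)) | 0 ≤ x 0 ∧ x 0 ≤ h ∧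
        ∑ i : Fin n, x (Fin.succ i) ^ 2 ≤ (ϑ * (1 - x 0 / h)) ^ 2}
      = (⇑(MeasurableEquiv.piFinSuccAbove (fun _ : Fin (n+1) => ℝ) 0) ∘
          ⇑(MeasurableEquiv.toLp 2 (Fin (n + 1) → ℝ)).symm) ⁻¹' T := by
    ext x
    simp [hT, MeasurableEquiv.piFinSuccAbove, Fin.removeNth, Fin.zero_succAbove,
      MeasurableEquiv.toLp_symm_apply, Fin.tail]
  rw [key, (e2.comp e1).measure_preimage mT.nullMeasurableSet]
  rw [Measure.volume_eq_prod, Measure.prod_apply mT]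
  have slice : ∀ t : ℝ, volume (Prod.mk t ⁻¹' T) =
      Set.indicator (Set.Icc 0 h) (fun t => ENNReal.ofReal ((ϑ * (1 - t / h)) ^ n) *
        volume (closedBall (0 : EuclideanSpace ℝ (Fin n)) 1)) t := by
    intro t
    by_cases ht : t ∈ Set.Icc (0:ℝ) h
    · rw [Set.indicator_of_mem ht]
      have hr : 0 ≤ ϑ * (1 - t / h) :=
        mul_nonneg hϑ.le (by rw [sub_nonneg]; exact div_le_one_of_le₀ ht.2 hh.le)
      have hset : Prod.mk t ⁻¹' T =
          ⇑(MeasurableEquiv.toLp 2 (Fin n → ℝ)).symm.symm ⁻¹' (closedBall 0 (ϑ * (1 - t / h))) := by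
        ext y
        simp only [hT, Set.mem_preimage, Set.mem_setOf_eq, mem_closedBall_zero_iff,
          EuclideanSpace.norm_eq, MeasurableEquiv.symm_symm, MeasurableEquiv.toLp_apply, PiLp.toLp_apply, Real.norm_eq_abs, sq_abs]
        rw [Real.sqrt_le_iff]
        constructor
        · rintro ⟨-, -, h3⟩; exact ⟨hr, h3⟩
        · rintro ⟨-, h3⟩; exact ⟨ht.1, ht.2, h3⟩
      rw [hset, (MeasurePreserving.symm _ (EuclideanSpace.volume_preserving_symm_measurableEquiv_toLp (Fin n))).measure_preimage
        measurableSet_closedBall.nullMeasurableSet, Measure.addHaar_closedBall' _ _ hr,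
        finrank_euclideanSpace_fin]
    · rw [Set.indicator_of_notMem ht]
      have : Prod.mk t ⁻¹' T = ∅ := by
        ext y
        simp only [hT, Set.mem_preimage, Set.mem_setOf_eq, Set.mem_empty_iff_false, iff_false]
        rintro ⟨h1, h2, -⟩
        exact ht ⟨h1, h2⟩
      simp [this]
  rw [lintegral_congr slice, lintegral_indicator measurableSet_Icc]
  rw [lintegral_mul_const _ (by fun_prop : Measurable fun t : ℝ => ENNReal.ofReal ((ϑ * (1 - t / h)) ^ n))]
  congr 1
  rw [← ofReal_integral_eq_lintegral_ofReal
    ((by fun_prop : Continuous fun t : ℝ => (ϑ * (1 - t / h)) ^ n).integrableOn_Icc)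
    ((ae_restrict_mem measurableSet_Icc).mono fun t ht =>
      pow_nonneg (mul_nonneg hϑ.le (by rw [sub_nonneg]; exact div_le_one_of_le₀ ht.2 hh.le)) n)]
  congr 1
  rw [MeasureTheory.integral_Icc_eq_integral_Ioc, ← intervalIntegral.integral_of_le hh.le]
  simp_rw [mul_pow]
  rw [intervalIntegral.integral_const_mul, integ_aux n hh]



theorem stmt_13 (d : ℕ) (hd : 1 ≤ d)
    (f ℓ : EuclideanSpace ℝ (Fin d) → ℝ)
    (hf0 : ∀ x, 0 ≤ f x) (hfusc : UpperSemicontinuous f)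
    (hflc : ∀ x y : EuclideanSpace ℝ (Fin d), ∀ p q : ℝ, 0 ≤ p → 0 ≤ q → p + q = 1 →
      f x ^ p * f y ^ q ≤ f (p • x + q • y))
    (hfint : Integrable f) (hfpos : 0 < ∫ x, f x)
    (Θ ϑ α : ℝ) (a : EuclideanSpace ℝ (Fin d))
    (hΘ : Θ = (⨆ x, f x) / 2) (hϑ : 0 < ϑ)
    (hball : Metric.closedBall (0 : EuclideanSpace ℝ (Fin d)) ϑ ⊆ {x | Θ ≤ f x})
    (hfl : ∀ x, f x ≤ ℓ x) (hℓ0 : ∀ x, 0 ≤ ℓ x)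
    (hℓlc : ∀ x y : EuclideanSpace ℝ (Fin d), ∀ p q : ℝ, 0 ≤ p → 0 ≤ q → p + q = 1 →
      ℓ x ^ p * ℓ y ^ q ≤ ℓ (p • x + q • y))
    (hmax : ∀ x, ℓ x ≤ α) (hla : ℓ a = α) :
    convexHull ℝ (Metric.closedBall (0 : EuclideanSpace ℝ (Fin d)) ϑ ∪ {a}) ⊆ {x | Θ ≤ ℓ x} ∧
    ENNReal.ofReal (Θ * ϑ ^ (d - 1) *
        (volume (Metric.closedBall (0 : EuclideanSpace ℝ (Fin (d - 1))) 1)).toReal * ‖a‖ / d)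
      ≤ ∫⁻ x, ENNReal.ofReal (ℓ x) := by
  obtain ⟨n, rfl⟩ : ∃ n, d = n + 1 := ⟨d - 1, (Nat.succ_pred_eq_of_pos hd).symm⟩
  have hΘ0 : 0 ≤ Θ := by
    rw [hΘ]; exact div_nonneg (Real.iSup_nonneg hf0) (by norm_num)
  have hΘα : Θ ≤ α :=
    le_trans (le_trans (hball (Metric.mem_closedBall_self hϑ.le)) (hfl 0)) (hmax 0)
  -- Part 1
  have part1 : convexHull ℝ (Metric.closedBall (0 : EuclideanSpace ℝ (Fin (n+1))) ϑ ∪ {a})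
      ⊆ {x | Θ ≤ ℓ x} := by
    rcases hΘ0.eq_or_lt with hΘz | hΘpos
    · intro x _; exact le_trans hΘz.ge (hℓ0 x)
    · have hconv : Convex ℝ {x : EuclideanSpace ℝ (Fin (n+1)) | Θ ≤ ℓ x} := by
        intro x hx y hy p q hp hq hpq
        have h1 : Θ ≤ ℓ x := hx
        have h2 : Θ ≤ ℓ y := hy
        show Θ ≤ ℓ (p • x + q • y)
        calc Θ = Θ ^ (p + q) := by rw [hpq, Real.rpow_one]
          _ = Θ ^ p * Θ ^ q := Real.rpow_add hΘpos p q
          _ ≤ ℓ x ^ p * ℓ y ^ q :=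
            mul_le_mul (Real.rpow_le_rpow hΘ0 h1 hp) (Real.rpow_le_rpow hΘ0 h2 hq)
              (Real.rpow_nonneg hΘ0 q) (Real.rpow_nonneg (hℓ0 x) p)
          _ ≤ ℓ (p • x + q • y) := hℓlc x y p q hp hq hpq
      refine convexHull_min (Set.union_subset ?_ ?_) hconv
      · intro x hx; exact le_trans (hball hx) (hfl x)
      · intro x hx
        rcases hx with rfl
        show Θ ≤ ℓ x
        rw [hla]; exact hΘα
  refine ⟨part1, ?_⟩
  -- Part 2
  simp only [Nat.add_sub_cancel]
  rcases hΘ0.eq_or_lt with hΘz | hΘpos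
  · simp [← hΘz]
  rcases eq_or_ne a 0 with rfl | ha
  · simp
  have hh : 0 < ‖a‖ := norm_pos_iff.mpr ha
  set a' : EuclideanSpace ℝ (Fin (n+1)) := EuclideanSpace.single 0 ‖a‖ with ha'def
  have hna' : ‖a'‖ = ‖a‖ := by
    rw [ha'def, EuclideanSpace.norm_single, Real.norm_eq_abs, abs_of_pos hh]
  set R : EuclideanSpace ℝ (Fin (n+1)) ≃ₗᵢ[ℝ] EuclideanSpace ℝ (Fin (n+1)) :=
    Submodule.reflection (ℝ ∙ (a' - a))ᗮ with hRdef
  have hR : R a' = a := Submodule.reflection_sub hna'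
  set C₀ : Set (EuclideanSpace ℝ (Fin (n+1))) :=
    {x | 0 ≤ x 0 ∧ x 0 ≤ ‖a‖ ∧
      ∑ i : Fin n, x (Fin.succ i) ^ 2 ≤ (ϑ * (1 - x 0 / ‖a‖)) ^ 2} with hC₀def
  -- C₀ is contained in the convex hull of the ball and a'
  have hsub : C₀ ⊆ convexHull ℝ (Metric.closedBall 0 ϑ ∪ {a'}) := by
    rintro x ⟨h1, h2, h3⟩
    set t := x 0 / ‖a‖ with htdef
    have ht0 : 0 ≤ t := div_nonneg h1 hh.le
    have ht1 : t ≤ 1 := div_le_one_of_le₀ h2 hh.le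
    have hϑt : 0 ≤ ϑ * (1 - t) := mul_nonneg hϑ.le (by linarith)
    set y : EuclideanSpace ℝ (Fin (n+1)) := x - EuclideanSpace.single 0 (x 0) with hydef
    have hy0 : y 0 = 0 := by
      simp [hydef, EuclideanSpace.single_apply]
    have hys : ∀ i : Fin n, y (Fin.succ i) = x (Fin.succ i) := by
      intro i
      simp [hydef, EuclideanSpace.single_apply, Fin.succ_ne_zero]
    have hnorm : ‖y‖ = Real.sqrt (∑ i : Fin (n+1), y i ^ 2) := by
      rw [EuclideanSpace.norm_eq]
      simp only [Real.norm_eq_abs, sq_abs]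
    have hny : ‖y‖ ≤ ϑ * (1 - t) := by
      rw [hnorm]
      refine Real.sqrt_le_iff.mpr ⟨hϑt, ?_⟩
      rw [Fin.sum_univ_succ, hy0]
      simpa [hys] using h3
    have hxeq : x = EuclideanSpace.single 0 (x 0) + y := by
      rw [hydef]; abel
    rcases ht1.lt_or_eq with ht1' | ht1'
    · have h1t : (1 : ℝ) - t ≠ 0 := by linarith
      set w : EuclideanSpace ℝ (Fin (n+1)) := (1 - t)⁻¹ • y with hwdef
      have hw : w ∈ Metric.closedBall (0 : EuclideanSpace ℝ (Fin (n+1))) ϑ := by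
        rw [Metric.mem_closedBall, dist_zero_right, hwdef, norm_smul, Real.norm_eq_abs,
          abs_inv, abs_of_pos (by linarith : (0:ℝ) < 1 - t)]
        calc (1 - t)⁻¹ * ‖y‖ ≤ (1 - t)⁻¹ * (ϑ * (1 - t)) :=
              mul_le_mul_of_nonneg_left hny (inv_nonneg.mpr (by linarith))
          _ = ϑ := by field_simp
      have hta : t • a' = EuclideanSpace.single (0 : Fin (n+1)) (x 0) := by
        ext j
        simp only [ha'def, PiLp.smul_apply, EuclideanSpace.single_apply, smul_eq_mul,
          mul_ite, mul_zero]
        split_ifs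
        · rw [htdef]; exact div_mul_cancel₀ _ hh.ne'
        · rfl
      have hxc : x = (1 - t) • w + t • a' := by
        rw [hwdef, smul_inv_smul₀ h1t, hta, hydef]; abel
      have hseg : x ∈ segment ℝ w a' :=
        ⟨1 - t, t, by linarith, ht0, by ring, hxc.symm⟩
      exact segment_subset_convexHull (Set.mem_union_left _ hw)
        (Set.mem_union_right _ (Set.mem_singleton a')) hseg
    · -- t = 1
      have hx0 : x 0 = ‖a‖ := by
        rwa [htdef, div_eq_one_iff_eq hh.ne'] at ht1'
      have hyz : y = 0 := by
        rw [← norm_le_zero_iff]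
        calc ‖y‖ ≤ ϑ * (1 - t) := hny
          _ = 0 := by rw [← ht1']; ring
      have hxa : x = a' := by
        have h0 : EuclideanSpace.single (0 : Fin (n+1)) (x 0) = a' := by rw [hx0, ha'def]
        calc x = EuclideanSpace.single 0 (x 0) + y := hxeq
          _ = a' := by rw [hyz, add_zero, h0]
      exact subset_convexHull ℝ _ (Or.inr (by rw [hxa]; rfl))
  -- transport by the reflection R
  have himg : ⇑R '' C₀ ⊆ {x | Θ ≤ ℓ x} := by
    rintro _ ⟨x, hx, rfl⟩
    apply part1
    have h1 : R x ∈ ⇑R '' convexHull ℝ (Metric.closedBall 0 ϑ ∪ {a'}) := ⟨x, hsub hx, rfl⟩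
    rw [IsLinearMap.image_convexHull ⟨R.map_add, R.map_smul⟩, Set.image_union,
      Set.image_singleton, hR, R.image_closedBall, map_zero] at h1
    exact h1
  -- measurability
  have cC₀ : IsClosed C₀ := by
    have c0 : Continuous fun x : EuclideanSpace ℝ (Fin (n+1)) => x 0 :=
      (EuclideanSpace.proj (0 : Fin (n+1))).continuous
    have csum : Continuous fun x : EuclideanSpace ℝ (Fin (n+1)) =>
        ∑ i : Fin n, x (Fin.succ i) ^ 2 :=
      continuous_finset_sum _ fun i _ =>
        ((EuclideanSpace.proj (Fin.succ i : Fin (n+1))).continuous).pow 2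
    have c3 : Continuous fun x : EuclideanSpace ℝ (Fin (n+1)) =>
        (ϑ * (1 - x 0 / ‖a‖)) ^ 2 := by fun_prop
    exact (isClosed_le continuous_const c0).inter
      ((isClosed_le c0 continuous_const).inter (isClosed_le csum c3))
  have mRC₀ : MeasurableSet (⇑R '' C₀) :=
    (R.toHomeomorph.isClosedMap _ cC₀).measurableSet
  have hvolimg : volume (⇑R '' C₀) = volume C₀ := by
    have himg2 : ⇑R '' C₀ = ⇑R.symm ⁻¹' C₀ := by
      ext z
      constructor
      · rintro ⟨x, hx, rfl⟩; simpa using hx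
      · intro hz; exact ⟨R.symm z, hz, by simp⟩
    rw [himg2]
    exact R.symm.measurePreserving.measure_preimage cC₀.measurableSet.nullMeasurableSet
  have hvol : volume C₀ = ENNReal.ofReal (ϑ ^ n * (‖a‖ / (n + 1))) *
      volume (Metric.closedBall (0 : EuclideanSpace ℝ (Fin n)) 1) := cone_vol n hϑ hh
  set Bn := volume (Metric.closedBall (0 : EuclideanSpace ℝ (Fin n)) 1) with hBndef
  have hBtop : Bn ≠ ⊤ := (IsCompact.measure_lt_top (isCompact_closedBall _ _)).ne
  calc ENNReal.ofReal (Θ * ϑ ^ n * Bn.toReal * ‖a‖ / (↑(n+1) : ℝ))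
      = ENNReal.ofReal Θ * volume (⇑R '' C₀) := by
        rw [hvolimg, hvol]
        have hrw : Θ * ϑ ^ n * Bn.toReal * ‖a‖ / (↑(n+1) : ℝ)
            = Θ * (ϑ ^ n * (‖a‖ / (↑n + 1))) * Bn.toReal := by push_cast; ring
        rw [hrw, ENNReal.ofReal_mul (mul_nonneg hΘpos.le (by positivity)),
          ENNReal.ofReal_mul hΘpos.le, ENNReal.ofReal_toReal hBtop, mul_assoc]
    _ ≤ ∫⁻ x in ⇑R '' C₀, ENNReal.ofReal (ℓ x) := by
        rw [← setLIntegral_const]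
        refine setLIntegral_mono' mRC₀ fun x hx => ?_
        exact ENNReal.ofReal_le_ofReal (himg hx)
    _ ≤ ∫⁻ x, ENNReal.ofReal (ℓ x) := setLIntegral_le_lintegral _ _
end

section
/- Let Φ: (t₀', ∞) → (0, ∞) be concave (t₀' = log‖f‖, t₀ > t₀') and satisfy Φ(t) ≤ Φ(t₀)e^{(t-t₀)/d} for all t in the domain. Then Φ(t) ≤ Φ(t₀)(1 + (t - t₀)/d) for all t, and consequently t₀ ≤ d + t₀'. -/
theorem stmt_15 (Φ : ℝ → ℝ) (t₀' t₀ d : ℝ) (hd : 0 < d) (ht₀ : t₀ ∈ Set.Ioi t₀')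
    (hconc : ConcaveOn ℝ (Set.Ioi t₀') Φ)
    (hpos : ∀ t ∈ Set.Ioi t₀', 0 < Φ t)
    (hexp : ∀ t ∈ Set.Ioi t₀', Φ t ≤ Φ t₀ * Real.exp ((t - t₀) / d)) :
    (∀ t ∈ Set.Ioi t₀', Φ t ≤ Φ t₀ * (1 + (t - t₀) / d)) ∧ t₀ ≤ d + t₀' := by
  have ht₀'' : t₀' < t₀ := ht₀
  have hΦt₀ : 0 < Φ t₀ := hpos t₀ ht₀
  have main : ∀ t ∈ Set.Ioi t₀', Φ t ≤ Φ t₀ * (1 + (t - t₀) / d) := by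
    intro t ht
    have ht' : t₀' < t := ht
    rcases lt_trichotomy t t₀ with hlt | heq | hgt
    · -- t < t₀ : use s = t₀ - h with h ∈ (0, t₀ - t)
      have key : ∀ h ∈ Set.Ioo (0:ℝ) (t₀ - t),
          Φ t ≤ Φ t₀ * (1 + (t - t₀) / (d + h)) := by
        intro h hh
        obtain ⟨hh0, hh1⟩ := hh
        have htt : (0:ℝ) < t₀ - t := by linarith
        have hsmem : t₀ - h ∈ Set.Ioi t₀' := by
          simp only [Set.mem_Ioi]; linarith
        have hc := hconc.2 ht ht₀ (show (0:ℝ) ≤ h / (t₀ - t) by positivity)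
          (show (0:ℝ) ≤ (t₀ - t - h) / (t₀ - t) by apply div_nonneg <;> linarith)
          (show h / (t₀ - t) + (t₀ - t - h) / (t₀ - t) = 1 by field_simp; ring)
        have hpt : (h / (t₀ - t)) • t + ((t₀ - t - h) / (t₀ - t)) • t₀ = t₀ - h := by
          simp only [smul_eq_mul]
          field_simp
          ring
        rw [hpt] at hc
        have hsb : Φ (t₀ - h) ≤ Φ t₀ * Real.exp ((t₀ - h - t₀) / d) := hexp _ hsmem
        have hE : Real.exp ((t₀ - h - t₀) / d) ≤ d / (d + h) := by
          have h1 : 1 + h / d ≤ Real.exp (h / d) := by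
            have := Real.add_one_le_exp (h / d); linarith
          have h2 : Real.exp ((t₀ - h - t₀) / d) = (Real.exp (h / d))⁻¹ := by
            rw [← Real.exp_neg]; ring_nf
          rw [h2]
          rw [inv_le_iff_one_le_mul₀ (Real.exp_pos _)]
          rw [div_mul_eq_mul_div, le_div_iff₀ (by linarith)]
          have hdd : d * (h / d) = h := by field_simp
          linarith [mul_le_mul_of_nonneg_left h1 hd.le]
        have hsb2 : Φ (t₀ - h) ≤ Φ t₀ * (d / (d + h)) :=
          hsb.trans (by nlinarith)
        -- combine
        simp only [smul_eq_mul] at hc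
        have hchain : h / (t₀ - t) * Φ t + (t₀ - t - h) / (t₀ - t) * Φ t₀
            ≤ Φ t₀ * (d / (d + h)) := hc.trans hsb2
        have hdh : (0:ℝ) < d + h := by linarith
        rw [show (1 + (t - t₀) / (d + h)) = (d + h + (t - t₀)) / (d + h) by
          field_simp, ← mul_div_assoc, le_div_iff₀ hdh]
        have := mul_le_mul_of_nonneg_left hchain (mul_pos htt hdh).le
        have hexpand : (t₀ - t) * (d + h) *
            (h / (t₀ - t) * Φ t + (t₀ - t - h) / (t₀ - t) * Φ t₀)
            = h * ((d + h) * Φ t) + (t₀ - t - h) * (d + h) * Φ t₀ := by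
          field_simp
        have hrhs : (t₀ - t) * (d + h) * (Φ t₀ * (d / (d + h)))
            = (t₀ - t) * d * Φ t₀ := by
          field_simp
        rw [hexpand, hrhs] at this
        nlinarith [this, hh0, mul_pos hh0 hdh]
      have tends : Filter.Tendsto (fun h : ℝ => Φ t₀ * (1 + (t - t₀) / (d + h)))
          (nhdsWithin 0 (Set.Ioi 0)) (nhds (Φ t₀ * (1 + (t - t₀) / d))) := by
        have hcont : ContinuousAt (fun h : ℝ => Φ t₀ * (1 + (t - t₀) / (d + h))) 0 := by
          apply ContinuousAt.mul continuousAt_const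
          apply ContinuousAt.add continuousAt_const
          apply ContinuousAt.div continuousAt_const (by fun_prop)
          simpa using ne_of_gt hd
        have := hcont.tendsto.mono_left (nhdsWithin_le_nhds (s := Set.Ioi (0:ℝ)))
        simpa using this
      refine ge_of_tendsto tends ?_
      have hIoo : Set.Ioo (0:ℝ) (t₀ - t) ∈ nhdsWithin 0 (Set.Ioi 0) :=
        Ioo_mem_nhdsGT_of_mem ⟨le_refl 0, by linarith⟩
      filter_upwards [hIoo] with h hh using key h hh
    · simp [heq]
    · -- t > t₀ : use s = t₀ + h with h ∈ (0, min (t - t₀) d)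
      have key : ∀ h ∈ Set.Ioo (0:ℝ) (min (t - t₀) d),
          Φ t ≤ Φ t₀ * (1 + (t - t₀) / (d - h)) := by
        intro h hh
        obtain ⟨hh0, hh1⟩ := hh
        have hh1a : h < t - t₀ := lt_of_lt_of_le hh1 (min_le_left _ _)
        have hh1b : h < d := lt_of_lt_of_le hh1 (min_le_right _ _)
        have htt : (0:ℝ) < t - t₀ := by linarith
        have hsmem : t₀ + h ∈ Set.Ioi t₀' := by
          simp only [Set.mem_Ioi]; linarith
        have hc := hconc.2 ht₀ ht
          (show (0:ℝ) ≤ (t - t₀ - h) / (t - t₀) by apply div_nonneg <;> linarith)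
          (show (0:ℝ) ≤ h / (t - t₀) by positivity)
          (show (t - t₀ - h) / (t - t₀) + h / (t - t₀) = 1 by field_simp; ring)
        have hpt : ((t - t₀ - h) / (t - t₀)) • t₀ + (h / (t - t₀)) • t = t₀ + h := by
          simp only [smul_eq_mul]
          field_simp
          ring
        rw [hpt] at hc
        have hsb : Φ (t₀ + h) ≤ Φ t₀ * Real.exp ((t₀ + h - t₀) / d) := hexp _ hsmem
        have hE : Real.exp ((t₀ + h - t₀) / d) ≤ d / (d - h) := by
          have h1 : 1 + (-h) / d ≤ Real.exp ((-h) / d) := by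
            have := Real.add_one_le_exp ((-h) / d); linarith
          have h2 : Real.exp ((t₀ + h - t₀) / d) = (Real.exp ((-h) / d))⁻¹ := by
            rw [← Real.exp_neg]; ring_nf
          rw [h2]
          have hdmh : (0:ℝ) < d - h := by linarith
          have hpos' : (0:ℝ) < 1 + (-h) / d := by
            rw [neg_div]
            have : h / d < 1 := (div_lt_one hd).2 hh1b
            linarith
          have hE0 : (0:ℝ) < Real.exp ((-h) / d) := Real.exp_pos _
          rw [inv_le_iff_one_le_mul₀ hE0, div_mul_eq_mul_div, le_div_iff₀ hdmh]
          have hmul := mul_le_mul_of_nonneg_left h1 hd.le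
          have heq : d * (1 + -h / d) = d - h := by field_simp; ring
          linarith
        have hsb2 : Φ (t₀ + h) ≤ Φ t₀ * (d / (d - h)) :=
          hsb.trans (by nlinarith)
        simp only [smul_eq_mul] at hc
        have hchain : (t - t₀ - h) / (t - t₀) * Φ t₀ + h / (t - t₀) * Φ t
            ≤ Φ t₀ * (d / (d - h)) := hc.trans hsb2
        have hdh : (0:ℝ) < d - h := by linarith
        rw [show (1 + (t - t₀) / (d - h)) = (d - h + (t - t₀)) / (d - h) by
          field_simp, ← mul_div_assoc, le_div_iff₀ hdh]
        have := mul_le_mul_of_nonneg_left hchain (mul_pos htt hdh).le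
        have hexpand : (t - t₀) * (d - h) *
            ((t - t₀ - h) / (t - t₀) * Φ t₀ + h / (t - t₀) * Φ t)
            = (t - t₀ - h) * (d - h) * Φ t₀ + h * ((d - h) * Φ t) := by
          field_simp
        have hrhs : (t - t₀) * (d - h) * (Φ t₀ * (d / (d - h)))
            = (t - t₀) * d * Φ t₀ := by
          field_simp
        rw [hexpand, hrhs] at this
        nlinarith [this, hh0, mul_pos hh0 hdh]
      have tends : Filter.Tendsto (fun h : ℝ => Φ t₀ * (1 + (t - t₀) / (d - h)))
          (nhdsWithin 0 (Set.Ioi 0)) (nhds (Φ t₀ * (1 + (t - t₀) / d))) := by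
        have hcont : ContinuousAt (fun h : ℝ => Φ t₀ * (1 + (t - t₀) / (d - h))) 0 := by
          apply ContinuousAt.mul continuousAt_const
          apply ContinuousAt.add continuousAt_const
          apply ContinuousAt.div continuousAt_const (by fun_prop)
          simpa using ne_of_gt hd
        have := hcont.tendsto.mono_left (nhdsWithin_le_nhds (s := Set.Ioi (0:ℝ)))
        simpa using this
      refine ge_of_tendsto tends ?_
      have hmin : (0:ℝ) < min (t - t₀) d := lt_min (by linarith) hd
      have hIoo : Set.Ioo (0:ℝ) (min (t - t₀) d) ∈ nhdsWithin 0 (Set.Ioi 0) :=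
        Ioo_mem_nhdsGT_of_mem ⟨le_refl 0, hmin⟩
      filter_upwards [hIoo] with h hh using key h hh
  refine ⟨main, ?_⟩
  by_contra hcon
  push_neg at hcon
  have ht1 : t₀' < (t₀' + (t₀ - d)) / 2 := by linarith
  have h1 := main _ ht1
  have h2 : 1 + ((t₀' + (t₀ - d)) / 2 - t₀) / d < 0 := by
    have : ((t₀' + (t₀ - d)) / 2 - t₀) / d < -1 := by rw [div_lt_iff₀ hd]; linarith
    linarith
  have h3 := hpos _ ht1
  nlinarith [mul_neg_of_pos_of_neg hΦt₀ h2]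
end

section
/- Let f: ℝ^d → [0,∞) be log-concave with f(0) = ‖f‖_∞ = e^{-d} and f(x) ≤ e^{-|x|} for all x. Fix a unit vector u, let f_u(t) = f(tu), and suppose for every ε ∈ (0,1) there exists r > 1/ε with f_u((1-ε)r) ≥ e^{-r}. Then f_u(t) ≥ e^{-d}e^{-t} for all t ≥ 0. -/
theorem stmt_16 (d : ℕ) (hd : 1 ≤ d) (f : EuclideanSpace ℝ (Fin d) → ℝ)
    (hf0 : ∀ x, 0 ≤ f x)
    (hflc : ∀ x y : EuclideanSpace ℝ (Fin d), ∀ p q : ℝ, 0 ≤ p → 0 ≤ q → p + q = 1 →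
      f x ^ p * f y ^ q ≤ f (p • x + q • y))
    (hf0d : f 0 = Real.exp (-(d : ℝ))) (hsup : ∀ x, f x ≤ Real.exp (-(d : ℝ)))
    (hupper : ∀ x, f x ≤ Real.exp (-‖x‖))
    (u : EuclideanSpace ℝ (Fin d)) (hu : ‖u‖ = 1)
    (hacc : ∀ ε : ℝ, 0 < ε → ε < 1 → ∃ r : ℝ, 1 / ε < r ∧
      Real.exp (-r) ≤ f (((1 - ε) * r) • u)) :
    ∀ t : ℝ, 0 ≤ t → Real.exp (-(d : ℝ)) * Real.exp (-t) ≤ f (t • u) := by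
  have hd0 : (0:ℝ) ≤ d := Nat.cast_nonneg d
  intro t ht
  rcases ht.eq_or_lt with h | ht
  · rw [← h, zero_smul, hf0d, neg_zero, Real.exp_zero, mul_one]
  · have key : ∀ s, t < s → Real.exp (-(d:ℝ)) * Real.exp (-s) ≤ f (t • u) := by
      intro s hs
      have hs0 : 0 < s := ht.trans hs
      set ε := min ((s - t)/s) (1/(t+1)) with hεdef
      have hε0 : 0 < ε := lt_min (div_pos (sub_pos.2 hs) hs0) (by positivity)
      have hε1 : ε < 1 :=
        lt_of_le_of_lt (min_le_right _ _) ((div_lt_one (by linarith)).2 (by linarith))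
      have hεle1 : ε * s ≤ s - t := by
        have := min_le_left ((s - t)/s) (1/(t+1))
        rw [← hεdef, le_div_iff₀ hs0] at this; exact this
      have hεle2 : ε * (t+1) ≤ 1 := by
        have := min_le_right ((s - t)/s) (1/(t+1))
        rw [← hεdef, le_div_iff₀ (by linarith : (0:ℝ) < t+1)] at this; exact this
      obtain ⟨r, hr, hfr⟩ := hacc ε hε0 hε1
      have hrpos : 0 < r := lt_trans (by positivity) hr
      have hrε : 1 < r * ε := by
        have := (div_lt_iff₀ hε0).1 hr; linarith
      set R := (1 - ε) * r with hRdef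
      have hR0 : 0 < R := mul_pos (by linarith) hrpos
      have htR : t ≤ R := by nlinarith
      set q := t / R with hqdef
      have hq0 : 0 ≤ q := div_nonneg ht.le hR0.le
      have hq1 : q ≤ 1 := (div_le_one hR0).2 htR
      set p := 1 - q with hpdef
      have hp0 : 0 ≤ p := by linarith
      have hp1 : p ≤ 1 := by simp [hpdef]; exact hq0
      have hmain := hflc 0 (R • u) p q hp0 hq0 (by ring)
      rw [smul_zero, zero_add, smul_smul,
        div_mul_cancel₀ t hR0.ne'] at hmain
      have h2 : Real.exp (-(d:ℝ)) ^ p * Real.exp (-r) ^ q ≤ f 0 ^ p * f (R • u) ^ q := by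
        rw [hf0d]
        exact mul_le_mul_of_nonneg_left
          (Real.rpow_le_rpow (Real.exp_pos _).le hfr hq0)
          (Real.rpow_nonneg (Real.exp_pos _).le p)
      have hrq : r * q = t / (1 - ε) := by
        have h1ε : (1:ℝ) - ε ≠ 0 := by linarith
        rw [hqdef, hRdef]
        field_simp
      have hts : t / (1 - ε) ≤ s := by
        rw [div_le_iff₀ (by linarith)]; nlinarith
      have h3 : Real.exp (-(d:ℝ)) * Real.exp (-s) ≤
          Real.exp (-(d:ℝ)) ^ p * Real.exp (-r) ^ q := by
        rw [← Real.exp_mul, ← Real.exp_mul, ← Real.exp_add, ← Real.exp_add]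
        apply Real.exp_le_exp.2
        have hdp : (d:ℝ) * p ≤ d := mul_le_of_le_one_right hd0 hp1
        have : r * q ≤ s := by rw [hrq]; exact hts
        nlinarith
      calc Real.exp (-(d:ℝ)) * Real.exp (-s)
          ≤ Real.exp (-(d:ℝ)) ^ p * Real.exp (-r) ^ q := h3
        _ ≤ f 0 ^ p * f (R • u) ^ q := h2
        _ ≤ f (t • u) := hmain
    have htend : Filter.Tendsto (fun s => Real.exp (-(d:ℝ)) * Real.exp (-s)) (nhdsWithin t (Set.Ioi t))
        (nhds (Real.exp (-(d:ℝ)) * Real.exp (-t))) :=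
      ((Continuous.tendsto (by continuity) t)).mono_left nhdsWithin_le_nhds
    exact le_of_tendsto htend (eventually_nhdsWithin_of_forall fun s hs => key s hs)
end
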